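/- Let G be a patrolling graph, γ an optimal Defender's strategy for G, and o an observation with Prob^γ(o) > 0. Then for every target τ ∈ T, EU_A(γ[o], π_τ) ≤ α_max − Val_G, where π_τ is the Attacker's strategy that attacks τ immediately. -/

import Mathlib

namespace Patrolling

variable {V : Type} [Fintype V] [DecidableEq V] [Nonempty V]

/-- A patrolling graph `G = (V,T,E,time,d,α,β)`: a nonempty finite set of vertices `V`,
a nonempty set of targets `T ⊆ V`, edges `E`, positive traversal times `time` on edges,
attack times `d`, positive target costs `α`, and detection probabilities `β ∈ (0,1]`. -/
structure PatrollingGraph (V : Type) [Fintype V] [DecidableEq V] [Nonempty V] where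
  T : Finset V
  T_nonempty : T.Nonempty
  E : V → V → Prop
  time : V → V → ℕ
  time_pos : ∀ u v, E u v → 0 < time u v
  d : V → ℕ
  α : V → ℝ
  α_pos : ∀ τ ∈ T, 0 < α τ
  β : V → ℝ
  β_pos : ∀ τ ∈ T, 0 < β τ
  β_le_one : ∀ τ ∈ T, β τ ≤ 1

/-- `l` is a finite path in `G` (consecutive vertices joined by edges). -/
def IsPath (G : PatrollingGraph V) : List V → Prop
  | [] => True
  | [_] => True
  | u :: v :: rest => G.E u v ∧ IsPath G (v :: rest)

/-- Total traversal time along a finite sequence of vertices. -/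
def travTime (G : PatrollingGraph V) : List V → ℕ
  | u :: v :: rest => G.time u v + travTime G (v :: rest)
  | _ => 0

/-- A Defender's strategy: to every history (finite path) it assigns a probability
distribution on vertices, supported on successors of the last vertex of the history
(or arbitrary support for the empty history, giving the initial distribution). -/
structure DefStrategy (G : PatrollingGraph V) where
  f : List V → V → ℝ
  nonneg : ∀ h v, IsPath G h → 0 ≤ f h v
  sum_one : ∀ h, IsPath G h → (∑ v : V, f h v) = 1
  supp : ∀ h v, IsPath G h → 0 < f h v →
    h = [] ∨ ∃ u, h.getLast? = some u ∧ G.E u v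

/-- An Attacker's strategy: to every observation (a history together with the next
edge taken) it assigns `none` (wait) or `some τ` (attack the target `τ`), attacking
at most once along every play. -/
structure AttStrategy (G : PatrollingGraph V) where
  att : List V → V → Option V
  target : ∀ h v τ, att h v = some τ → τ ∈ G.T
  once : ∀ h v τ, att h v = some τ →
    ∀ i, 1 ≤ i → ∀ hlt : i < h.length, att (h.take i) (h.get ⟨i, hlt⟩) = none

/-- An observation `o = v₁,…,vₙ, vₙ → v_{n+1}`: a nonempty history together with
an edge emanating from its last vertex. -/
structure Obs (G : PatrollingGraph V) where
  hist : List V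
  next : V
  ne : hist ≠ []
  path : IsPath G hist
  edge : ∃ u, hist.getLast? = some u ∧ G.E u next

/-- The last vertex `vₙ` of an observation's history. -/
def lastV {G : PatrollingGraph V} (o : Obs G) : V := o.hist.getLast o.ne

/-- Probability that, having already produced the history `pre`, the Defender's
strategy `f` continues exactly along the list given as second argument. -/
def probListAux (f : List V → V → ℝ) : List V → List V → ℝ
  | _, [] => 1
  | pre, v :: rest => f pre v * probListAux f (pre ++ [v]) rest

/-- `Prob^γ(l)`: the probability that the strategy produces the vertex sequence `l`. -/
def probList (f : List V → V → ℝ) (l : List V) : ℝ := probListAux f [] l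

/-- `Prob^γ(o)` for an observation `o`. -/
def obsProb {G : PatrollingGraph V} (γ : DefStrategy G) (o : Obs G) : ℝ :=
  probList γ.f (o.hist ++ [o.next])

/-- `Eval(τ | u) = α(τ) · (1-β(τ))^(#_τ(u)-1) · β(τ)` as a function of the number
`c = #_τ(u)` of visits to `τ`. -/
def evalDet (G : PatrollingGraph V) (τ : V) (c : ℕ) : ℝ :=
  G.α τ * (1 - G.β τ) ^ (c - 1) * G.β τ

/-- `u ∈ Path(o,τ)`: a finite path starting at `v_{n+1}`, ending at `τ`, whose
traversal time from `vₙ` does not exceed `d(τ)`. -/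
def obsPathCond {G : PatrollingGraph V} (o : Obs G) (τ : V) (u : List V) : Prop :=
  u ≠ [] ∧ u.head? = some o.next ∧ u.getLast? = some τ ∧ IsPath G u ∧
    travTime G (lastV o :: u) ≤ G.d τ

/-- The protection `P^γ(τ | o) = Σ_{u ∈ Path(o,τ)} Prob^γ(u|o) · Eval(τ|u)`. -/
noncomputable def protection {G : PatrollingGraph V} (γ : DefStrategy G)
    (τ : V) (o : Obs G) : ℝ :=
  ∑' u : {u : List V // obsPathCond o τ u},
    probListAux γ.f (o.hist ++ [o.next]) u.val.tail * evalDet G τ (u.val.count τ)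

/-- Expected Attacker's utility
`EU_A(γ,π) = Σ_{τ∈T} Σ_{o∈Att(π,τ)} Prob^γ(o)·[α(τ) − P^γ(τ|o)]`. -/
noncomputable def euA {G : PatrollingGraph V} (γ : DefStrategy G) (π : AttStrategy G) : ℝ :=
  ∑ τ ∈ G.T, ∑' o : {o : Obs G // π.att o.hist o.next = some τ},
    obsProb γ o.val * (G.α τ - protection γ τ o.val)

/-- `α_max = max_{τ∈T} α(τ)`. -/
noncomputable def alphaMax (G : PatrollingGraph V) : ℝ := G.T.sup' G.T_nonempty G.α

/-- Expected Defender's utility `EU_D(γ,π) = α_max − EU_A(γ,π)`. -/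
noncomputable def euD {G : PatrollingGraph V} (γ : DefStrategy G) (π : AttStrategy G) : ℝ :=
  alphaMax G - euA γ π

/-- The value `Val_G(γ) = inf_π EU_D(γ,π)` of a Defender's strategy. -/
noncomputable def dVal {G : PatrollingGraph V} (γ : DefStrategy G) : ℝ :=
  ⨅ π : AttStrategy G, euD γ π

/-- The value of the game `Val_G = sup_γ Val_G(γ)`. -/
noncomputable def valG (G : PatrollingGraph V) : ℝ :=
  ⨆ γ : DefStrategy G, dVal γ

/-- A Defender's strategy is optimal if it achieves the value of the game. -/
def Optimal {G : PatrollingGraph V} (γ : DefStrategy G) : Prop := dVal γ = valG G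

/-- `γ'` is the shifted strategy `γ[o]`: it starts in `vₙ`, selects the edge
`vₙ → v_{n+1}` with probability one, and then
`γ[o](vₙ,v_{n+1},…,v_{n+k+1}) = γ(v₁,…,v_{n+k+1})`. -/
def IsShift {G : PatrollingGraph V} (γ : DefStrategy G) (o : Obs G)
    (γ' : DefStrategy G) : Prop :=
  γ'.f [] (lastV o) = 1 ∧
  γ'.f [lastV o] o.next = 1 ∧
  ∀ rest v, γ'.f (lastV o :: o.next :: rest) v = γ.f (o.hist ++ o.next :: rest) v

/-- The Attacker's strategy `π_τ` that attacks the target `τ` immediately: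
`π_τ(u→v) = attack_τ` for every one-step observation. -/
def attackNow (G : PatrollingGraph V) (τ : V) (hτ : τ ∈ G.T) : AttStrategy G where
  att := fun h _ => if h.length = 1 then some τ else none
  target := by
    intro h v τ' hres
    by_cases hl : h.length = 1
    · simp [hl] at hres
      subst hres
      exact hτ
    · simp [hl] at hres
  once := by
    intro h v τ' hres i hi hlt
    by_cases hl : h.length = 1
    · omega
    · simp [hl] at hres

/-- A regular Defender's strategy: memory sizes `mem`, transition probabilities `tr`
on eligible pairs `V̂ = {(v,m) : 1 ≤ m ≤ mem v}` supported on edges of `G`, and an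
initial distribution `init` on `V̂`. -/
structure RegStrategy (G : PatrollingGraph V) where
  mem : V → ℕ
  mem_pos : ∀ v, 1 ≤ mem v
  tr : V × ℕ → V × ℕ → ℝ
  init : V × ℕ → ℝ
  tr_nonneg : ∀ p q, 0 ≤ tr p q
  init_nonneg : ∀ p, 0 ≤ init p
  tr_supp : ∀ p q, 0 < tr p q →
    (1 ≤ p.2 ∧ p.2 ≤ mem p.1) ∧ (1 ≤ q.2 ∧ q.2 ≤ mem q.1) ∧ G.E p.1 q.1
  init_supp : ∀ p, 0 < init p → 1 ≤ p.2 ∧ p.2 ≤ mem p.1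
  tr_sum : ∀ p, 1 ≤ p.2 → p.2 ≤ mem p.1 → HasSum (tr p) 1
  init_sum : HasSum init 1

/-- `(v,m)` is an eligible pair for the regular strategy `R`. -/
def Elig {G : PatrollingGraph V} (R : RegStrategy G) (p : V × ℕ) : Prop :=
  1 ≤ p.2 ∧ p.2 ≤ R.mem p.1

/-- `Prob^σ(u) = ∏ σ((vᵢ,mᵢ),(v_{i+1},m_{i+1}))` along a sequence of eligible pairs. -/
def chainProb {G : PatrollingGraph V} (R : RegStrategy G) : List (V × ℕ) → ℝ
  | p :: q :: rest => R.tr p q * chainProb R (q :: rest)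
  | _ => 1

/-- Probability that the memory-augmented chain produces a given sequence of pairs,
including the initial distribution. -/
def regFullProb {G : PatrollingGraph V} (R : RegStrategy G) : List (V × ℕ) → ℝ
  | [] => 1
  | p :: rest => R.init p * chainProb R (p :: rest)

/-- `γ` is the Defender's strategy induced by the regular strategy `R`: for every
finite vertex sequence, the probability that `γ` produces it equals the marginal
probability of the memory-augmented chain. -/
def Induces {G : PatrollingGraph V} (R : RegStrategy G) (γ : DefStrategy G) : Prop :=
  ∀ l : List V, probList γ.f l =
    ∑' ms : {ms : List ℕ // ms.length = l.length}, regFullProb R (l.zip ms.val)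

/-- `R` is deterministic-update: `σ(v,m)(v',m₁) > 0` and `σ(v,m)(v',m₂) > 0`
imply `m₁ = m₂`. -/
def DetUpdate {G : PatrollingGraph V} (R : RegStrategy G) : Prop :=
  ∀ p v' m₁ m₂, 0 < R.tr p (v', m₁) → 0 < R.tr p (v', m₂) → m₁ = m₂

/-- `u ∈ Path(e,τ)`: an eligible path `(v₁,m₁),…,(v_k,m_k)` with `k ≥ 1` starting
at the endpoint of `e`, ending in a pair whose vertex is `τ`, whose traversal time
(from the vertex of the start of `e`) is at most `d(τ)`. -/
def regPathCond {G : PatrollingGraph V} (R : RegStrategy G)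
    (e : (V × ℕ) × (V × ℕ)) (τ : V) (u : List (V × ℕ)) : Prop :=
  u ≠ [] ∧ u.head? = some e.2 ∧ (u.map Prod.fst).getLast? = some τ ∧
    (∀ p ∈ u, Elig R p) ∧ IsPath G (u.map Prod.fst) ∧
    travTime G (e.1.1 :: u.map Prod.fst) ≤ G.d τ

/-- `P^σ(e,τ) = Σ_{u∈Path(e,τ)} Prob^σ(u) · Eval(τ|u)`. -/
noncomputable def regProtection {G : PatrollingGraph V} (R : RegStrategy G)
    (e : (V × ℕ) × (V × ℕ)) (τ : V) : ℝ :=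
  ∑' u : {u : List (V × ℕ) // regPathCond R e τ u},
    chainProb R u.val * evalDet G τ ((u.val.map Prod.fst).count τ)

/-- `RVal_G(σ) = α_max − max_{e∈Ê, τ∈T} {α(τ) − P^σ(e,τ)}`, where `Ê` is the set of
eligible edges (those with `σ(e) > 0`). -/
noncomputable def rVal {G : PatrollingGraph V} (R : RegStrategy G) : ℝ :=
  alphaMax G - sSup {x : ℝ | ∃ e : (V × ℕ) × (V × ℕ), ∃ τ ∈ G.T,
    0 < R.tr e.1 e.2 ∧ x = G.α τ - regProtection R e τ}

/-- `d_max = max_{τ∈T} d(τ)`. -/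
def dMax (G : PatrollingGraph V) : ℕ := G.T.sup G.d

/-- A continuation `u` after the history `h` that ends at `t` and whose traversal
time (from the last vertex of `h`) is at most `ℓ`. -/
def contCond (G : PatrollingGraph V) (h : List V) (t : V) (ℓ : ℕ) (u : List V) : Prop :=
  u ≠ [] ∧ u.getLast? = some t ∧
    ∃ w, h.getLast? = some w ∧ IsPath G (w :: u) ∧ travTime G (w :: u) ≤ ℓ

/-- The probability that `γ` successfully detects an ongoing attack at `t` within at
most `ℓ` time units after executing the history `h`. -/
noncomputable def detectProb {G : PatrollingGraph V} (γ : DefStrategy G)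
    (h : List V) (t : V) (ℓ : ℕ) : ℝ :=
  ∑' u : {u : List V // contCond G h t ℓ u},
    probListAux γ.f h u.val * ((1 - G.β t) ^ (u.val.count t - 1) * G.β t)

/-- The histories `h, h'` are `δ`-similar w.r.t. `γ`: they end with the same vertex,
both have positive probability under `γ`, and for every target `t` and every
`ℓ ∈ {1,…,d_max}` the detection probabilities after `h` and `h'` differ by at most `δ`. -/
def DeltaSimilar {G : PatrollingGraph V} (γ : DefStrategy G) (δ : ℝ)
    (h h' : List V) : Prop :=
  h ≠ [] ∧ h' ≠ [] ∧ IsPath G h ∧ IsPath G h' ∧ h.getLast? = h'.getLast? ∧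
  0 < probList γ.f h ∧ 0 < probList γ.f h' ∧
  ∀ t ∈ G.T, ∀ ℓ : ℕ, 1 ≤ ℓ → ℓ ≤ dMax G →
    |detectProb γ h t ℓ - detectProb γ h' t ℓ| ≤ δ



/-! ### Auxiliary infrastructure for Statement 9 -/

set_option linter.unusedSectionVars false

section AuxPaths

variable {G : PatrollingGraph V}

lemma isPath_nil : IsPath G [] := trivial
lemma isPath_single (x : V) : IsPath G [x] := trivial

lemma isPath_cons_cons {x y : V} {l : List V} :
    IsPath G (x :: y :: l) ↔ G.E x y ∧ IsPath G (y :: l) := Iff.rfl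

lemma isPath_append_left : ∀ (a b : List V), IsPath G (a ++ b) → IsPath G a := by
  intro a
  induction a with
  | nil => intro b _; trivial
  | cons x rest ih =>
    intro b h
    cases rest with
    | nil => trivial
    | cons y t =>
      rw [List.cons_append, List.cons_append] at h
      rw [isPath_cons_cons] at h ⊢
      exact ⟨h.1, by simpa using ih b (by simpa using h.2)⟩

lemma isPath_append : ∀ (a : List V) (x : V) (c : List V), IsPath G a →
    a.getLast? = some x → IsPath G (x :: c) → IsPath G (a ++ c) := by
  intro a
  induction a with
  | nil => intro x c _ hx _; simp at hx
  | cons y rest ih =>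
    intro x c hy hx hc
    cases rest with
    | nil =>
      simp at hx
      subst hx
      simpa using hc
    | cons z t =>
      rw [List.getLast?_cons_cons] at hx
      rw [isPath_cons_cons] at hy
      exact isPath_cons_cons.mpr ⟨hy.1, ih x c hy.2 hx hc⟩

lemma isPath_concat (a : List V) (v : V) (ha : IsPath G a)
    (h : a = [] ∨ ∃ x, a.getLast? = some x ∧ G.E x v) : IsPath G (a ++ [v]) := by
  rcases h with h | ⟨x, hx, hE⟩
  · subst h; simp; trivial
  · exact isPath_append a x [v] ha hx ⟨hE, trivial⟩

/-- a path continues as a path from any last-vertex point of view -/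
lemma isPath_of_append : ∀ (a : List V) (x : V) (b : List V), IsPath G (a ++ b) →
    a.getLast? = some x → IsPath G (x :: b) := by
  intro a
  induction a with
  | nil => intro x b _ hx; simp at hx
  | cons y rest ih =>
    intro x b h hx
    cases rest with
    | nil =>
      simp at hx; subst hx; simpa using h
    | cons z t =>
      rw [List.getLast?_cons_cons] at hx
      rw [List.cons_append, List.cons_append, isPath_cons_cons] at h
      exact ih x b (by simpa using h.2) hx

end AuxPaths

section AuxProb

variable {G : PatrollingGraph V}

lemma probListAux_nil (f : List V → V → ℝ) (pre : List V) :
    probListAux f pre [] = 1 := rfl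

lemma probListAux_cons (f : List V → V → ℝ) (pre : List V) (v : V) (rest : List V) :
    probListAux f pre (v :: rest) = f pre v * probListAux f (pre ++ [v]) rest := rfl

lemma probListAux_append (f : List V → V → ℝ) :
    ∀ (l₁ l₂ pre : List V),
      probListAux f pre (l₁ ++ l₂) = probListAux f pre l₁ * probListAux f (pre ++ l₁) l₂ := by
  intro l₁
  induction l₁ with
  | nil => intro l₂ pre; simp [probListAux_nil]
  | cons v t ih =>
    intro l₂ pre
    rw [List.cons_append, probListAux_cons, probListAux_cons, ih, mul_assoc]
    congr 2
    simp

lemma probListAux_nonneg (γ : DefStrategy G) :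
    ∀ (l pre : List V), IsPath G pre → 0 ≤ probListAux γ.f pre l := by
  intro l
  induction l with
  | nil => intro pre _; rw [probListAux_nil]; norm_num
  | cons v t ih =>
    intro pre hpre
    rw [probListAux_cons]
    rcases eq_or_lt_of_le (γ.nonneg pre v hpre) with h0 | hpos
    · rw [← h0, zero_mul]
    · refine mul_nonneg hpos.le (ih _ ?_)
      exact isPath_concat pre v hpre (γ.supp pre v hpre hpos)

lemma probListAux_ne_zero_isPath (γ : DefStrategy G) :
    ∀ (l pre : List V), IsPath G pre → probListAux γ.f pre l ≠ 0 →
      IsPath G (pre ++ l) := by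
  intro l
  induction l with
  | nil => intro pre hpre _; simpa using hpre
  | cons v t ih =>
    intro pre hpre hne
    rw [probListAux_cons] at hne
    have h1 : γ.f pre v ≠ 0 := fun h => hne (by rw [h, zero_mul])
    have hpos : 0 < γ.f pre v := lt_of_le_of_ne (γ.nonneg pre v hpre) (Ne.symm h1)
    have hp1 : IsPath G (pre ++ [v]) := isPath_concat pre v hpre (γ.supp pre v hpre hpos)
    have h2 : probListAux γ.f (pre ++ [v]) t ≠ 0 := fun h => hne (by rw [h, mul_zero])
    have := ih (pre ++ [v]) hp1 h2
    simpa using this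

lemma probList_nonneg (γ : DefStrategy G) (l : List V) : 0 ≤ probList γ.f l :=
  probListAux_nonneg γ l [] trivial

lemma probList_ne_zero_isPath (γ : DefStrategy G) (l : List V)
    (h : probList γ.f l ≠ 0) : IsPath G l := by
  have := probListAux_ne_zero_isPath γ l [] trivial h
  simpa using this

lemma probListAux_congr (f₁ f₂ : List V → V → ℝ) (p₁ p₂ : List V)
    (hf : ∀ (rest : List V) (v : V), f₁ (p₁ ++ rest) v = f₂ (p₂ ++ rest) v) :
    ∀ (l rest : List V),
      probListAux f₁ (p₁ ++ rest) l = probListAux f₂ (p₂ ++ rest) l := by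
  intro l
  induction l with
  | nil => intro rest; simp [probListAux_nil]
  | cons v t ih =>
    intro rest
    rw [probListAux_cons, probListAux_cons, hf rest v]
    congr 1
    have := ih (rest ++ [v])
    simpa [List.append_assoc] using this

end AuxProb

section AuxObs

variable {G : PatrollingGraph V}

lemma Obs.ext' {o₁ o₂ : Obs G} (h1 : o₁.hist = o₂.hist) (h2 : o₁.next = o₂.next) :
    o₁ = o₂ := by
  cases o₁; cases o₂; simp_all

/-- A pair `(h,v)` that gives rise to an observation. -/
def ObsOK (G : PatrollingGraph V) (pr : List V × V) : Prop :=
  pr.1 ≠ [] ∧ IsPath G pr.1 ∧ ∃ u, pr.1.getLast? = some u ∧ G.E u pr.2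

def mkObs (pr : List V × V) (h : ObsOK G pr) : Obs G :=
  ⟨pr.1, pr.2, h.1, h.2.1, h.2.2⟩

lemma mkObs_eq (pr : List V × V) (h h' : ObsOK G pr) : mkObs pr h = mkObs pr h' := rfl

lemma mkObs_self (o : Obs G) (h : ObsOK G (o.hist, o.next)) : mkObs (o.hist, o.next) h = o :=
  Obs.ext' rfl rfl

lemma obsOK_of_obs (o : Obs G) : ObsOK G (o.hist, o.next) := ⟨o.ne, o.path, o.edge⟩

open Classical in
/-- The weight of an observation as a function of its underlying pair. -/
noncomputable def W (σ : DefStrategy G) (τ' : V) (pr : List V × V) : ℝ :=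
  if h : ObsOK G pr then
    obsProb σ (mkObs pr h) * (G.α τ' - protection σ τ' (mkObs pr h))
  else 0

lemma W_of_obs (σ : DefStrategy G) (τ' : V) (o : Obs G) :
    W σ τ' (o.hist, o.next) = obsProb σ o * (G.α τ' - protection σ τ' o) := by
  rw [W, dif_pos (obsOK_of_obs o), mkObs_self]

lemma lastV_eq_of_getLast? {o₁ o₂ : Obs G}
    (h : o₁.hist.getLast? = o₂.hist.getLast?) : lastV o₁ = lastV o₂ := by
  have h1 : o₁.hist.getLast? = some (lastV o₁) := List.getLast?_eq_getLast o₁.ne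
  have h2 : o₂.hist.getLast? = some (lastV o₂) := List.getLast?_eq_getLast o₂.ne
  rw [h1, h2] at h
  exact Option.some_injective _ h

lemma protection_congr (σ₁ σ₂ : DefStrategy G) (τ' : V) (o₁ o₂ : Obs G)
    (hlast : o₁.hist.getLast? = o₂.hist.getLast?) (hnext : o₁.next = o₂.next)
    (hpl : ∀ ll, probListAux σ₁.f (o₁.hist ++ [o₁.next]) ll
                = probListAux σ₂.f (o₂.hist ++ [o₂.next]) ll) :
    protection σ₁ τ' o₁ = protection σ₂ τ' o₂ := by
  have hL : lastV o₁ = lastV o₂ := lastV_eq_of_getLast? hlast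
  have hpred : ∀ u, obsPathCond o₁ τ' u ↔ obsPathCond o₂ τ' u := by
    intro u
    unfold obsPathCond
    rw [hL, hnext]
  unfold protection
  rw [← (Equiv.subtypeEquivRight hpred).tsum_eq
      (f := fun u : {u : List V // obsPathCond o₂ τ' u} =>
        probListAux σ₂.f (o₂.hist ++ [o₂.next]) u.val.tail * evalDet G τ' (u.val.count τ'))]
  exact tsum_congr fun u => by simp [Equiv.subtypeEquivRight, hpl]; rfl

/-- Master lemma: the attacked-observations sum of a finitely-attacking strategy is a
finite sum over pairs. -/
lemma tsum_attacked (ρ : AttStrategy G) (Fb : Finset (List V × V))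
    (hFb : ∀ h v, ρ.att h v ≠ none → (h, v) ∈ Fb) (τ' : V) (g : Obs G → ℝ)
    (W' : List V × V → ℝ)
    (hg : ∀ pr (h : ObsOK G pr), g (mkObs pr h) = W' pr)
    (hW0 : ∀ pr, ¬ ObsOK G pr → W' pr = 0) :
    ∑' o' : {o' : Obs G // ρ.att o'.hist o'.next = some τ'}, g o'.val
      = ∑ pr ∈ Fb.filter (fun pr => ρ.att pr.1 pr.2 = some τ'), W' pr := by
  classical
  set s := Fb.filter (fun pr => ρ.att pr.1 pr.2 = some τ' ∧ ObsOK G pr) with hs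
  let e : {o' : Obs G // ρ.att o'.hist o'.next = some τ'} ≃ {pr : List V × V // pr ∈ s} :=
    { toFun := fun o' => ⟨(o'.val.hist, o'.val.next), by
        simp only [hs, Finset.mem_filter]
        exact ⟨hFb _ _ (by rw [o'.2]; simp), o'.2, obsOK_of_obs o'.val⟩⟩
      invFun := fun x => ⟨mkObs x.val (by
          have := x.2; simp only [hs, Finset.mem_filter] at this; exact this.2.2), by
          have := x.2; simp only [hs, Finset.mem_filter] at this; exact this.2.1⟩
      left_inv := fun o' => Subtype.ext (mkObs_self o'.val (obsOK_of_obs o'.val))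
      right_inv := fun x => Subtype.ext rfl }
  have h1 : ∑' o' : {o' : Obs G // ρ.att o'.hist o'.next = some τ'}, g o'.val
      = ∑' x : {pr : List V × V // pr ∈ s}, W' x.val := by
    rw [← Equiv.tsum_eq e (fun x => W' x.val)]
    refine tsum_congr fun o' => ?_
    have h2 : (e o').val = (o'.val.hist, o'.val.next) := rfl
    rw [h2, ← hg (o'.val.hist, o'.val.next) (obsOK_of_obs o'.val), mkObs_self]
  rw [h1, Finset.tsum_subtype]
  refine Finset.sum_subset ?_ ?_
  · intro pr h
    simp only [hs, Finset.mem_filter] at h ⊢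
    exact ⟨h.1, h.2.1⟩
  · intro pr h1' h2'
    simp only [hs, Finset.mem_filter] at h1' h2'
    by_cases hOK : ObsOK G pr
    · exact absurd ⟨h1'.1, h1'.2, hOK⟩ h2'
    · exact hW0 pr hOK

end AuxObs

section AuxBasic

variable {G : PatrollingGraph V}

lemma euA_eq_sum (σ : DefStrategy G) (ρ : AttStrategy G) (Fb : Finset (List V × V))
    (hFb : ∀ h v, ρ.att h v ≠ none → (h, v) ∈ Fb) :
    euA σ ρ = ∑ τ' ∈ G.T, ∑ pr ∈ Fb.filter (fun pr => ρ.att pr.1 pr.2 = some τ'),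
      W σ τ' pr := by
  unfold euA
  refine Finset.sum_congr rfl fun τ' _ => ?_
  refine tsum_attacked ρ Fb hFb τ'
    (fun o => obsProb σ o * (G.α τ' - protection σ τ' o)) (W σ τ') ?_ ?_
  · intro pr h
    rw [W, dif_pos h]
  · intro pr h
    rw [W, dif_neg h]

/-- The attacker strategy that never attacks. -/
def noAttack (G : PatrollingGraph V) : AttStrategy G where
  att _ _ := none
  target := by intro h v τ hres; simp at hres
  once := by intro h v τ hres; simp at hres

lemma euA_noAttack (σ : DefStrategy G) : euA σ (noAttack G) = 0 := by
  unfold euA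
  refine Finset.sum_eq_zero fun τ' _ => ?_
  have : IsEmpty {o' : Obs G // (noAttack G).att o'.hist o'.next = some τ'} := by
    refine ⟨fun x => ?_⟩
    have := x.2
    simp [noAttack] at this
  exact tsum_empty

lemma alphaMax_pos (G : PatrollingGraph V) : 0 < alphaMax G := by
  obtain ⟨τ₀, hτ₀⟩ := G.T_nonempty
  exact lt_of_lt_of_le (G.α_pos τ₀ hτ₀) (Finset.le_sup' G.α hτ₀)

lemma alpha_le_alphaMax {τ' : V} (hτ' : τ' ∈ G.T) : G.α τ' ≤ alphaMax G :=
  Finset.le_sup' G.α hτ'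

lemma dVal_le_alphaMax (σ : DefStrategy G) : dVal σ ≤ alphaMax G := by
  by_cases hb : BddBelow (Set.range (euD σ))
  · refine le_trans (ciInf_le hb (noAttack G)) ?_
    rw [euD, euA_noAttack]
    simp
  · rw [dVal, Real.iInf_of_not_bddBelow hb]
    exact (alphaMax_pos G).le

lemma bddAbove_range_dVal : BddAbove (Set.range (dVal (G := G))) := by
  refine ⟨alphaMax G, ?_⟩
  rintro x ⟨σ, rfl⟩
  exact dVal_le_alphaMax σ

lemma dVal_le_valG (σ : DefStrategy G) : dVal σ ≤ valG G :=
  le_ciSup bddAbove_range_dVal σ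

instance (G : PatrollingGraph V) : Nonempty (AttStrategy G) := ⟨noAttack G⟩

lemma valG_le_alphaMax (σ : DefStrategy G) : valG G ≤ alphaMax G := by
  have : Nonempty (DefStrategy G) := ⟨σ⟩
  exact ciSup_le fun σ' => dVal_le_alphaMax σ'

lemma exists_response (σ : DefStrategy G) {ε : ℝ} (hε : 0 < ε) :
    ∃ π : AttStrategy G, alphaMax G - valG G - ε < euA σ π := by
  have h1 : dVal σ < valG G + ε := lt_of_le_of_lt (dVal_le_valG σ) (by linarith)
  obtain ⟨π, hπ⟩ := exists_lt_of_ciInf_lt h1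
  refine ⟨π, ?_⟩
  rw [euD] at hπ
  linarith

end AuxBasic

section AuxFinite

variable {G : PatrollingGraph V}

/-- inner summand of `euA` -/
noncomputable def gw (σ : DefStrategy G) (τ' : V) (o : Obs G) : ℝ :=
  obsProb σ o * (G.α τ' - protection σ τ' o)

lemma euA_eq_tsum_gw (σ : DefStrategy G) (π : AttStrategy G) :
    euA σ π = ∑ τ' ∈ G.T,
      ∑' o' : {o' : Obs G // π.att o'.hist o'.next = some τ'}, gw σ τ' o'.val := rfl

lemma exists_finite_sets (σ : DefStrategy G) (π : AttStrategy G) {ε' : ℝ} (hε' : 0 < ε')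
    (τ' : V) : ∃ Fs : Finset (List V × V),
      (∀ pr ∈ Fs, π.att pr.1 pr.2 = some τ') ∧
      (∑' o' : {o' : Obs G // π.att o'.hist o'.next = some τ'}, gw σ τ' o'.val)
        ≤ (∑ pr ∈ Fs, W σ τ' pr) + ε' := by
  classical
  by_cases hsum : Summable (fun o' : {o' : Obs G // π.att o'.hist o'.next = some τ'} =>
      gw σ τ' o'.val)
  · set S := ∑' o' : {o' : Obs G // π.att o'.hist o'.next = some τ'}, gw σ τ' o'.val with hS
    have h := hsum.hasSum
    have h2 := (Metric.tendsto_nhds.mp h) ε' hε'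
    obtain ⟨F, hF⟩ := h2.exists
    refine ⟨F.image (fun a => (a.val.hist, a.val.next)), ?_, ?_⟩
    · intro pr hpr
      simp only [Finset.mem_image] at hpr
      obtain ⟨a, _, rfl⟩ := hpr
      exact a.2
    · have himg : ∑ pr ∈ F.image (fun a => (a.val.hist, a.val.next)), W σ τ' pr
          = ∑ a ∈ F, gw σ τ' a.val := by
        rw [Finset.sum_image]
        · refine Finset.sum_congr rfl fun a _ => ?_
          exact W_of_obs σ τ' a.val
        · intro a _ b _ hab
          apply Subtype.ext
          apply Obs.ext' (congrArg Prod.fst hab) (congrArg Prod.snd hab)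
      rw [himg]
      have : |(∑ a ∈ F, gw σ τ' a.val) - S| < ε' := by
        rw [Real.dist_eq] at hF
        exact hF
      have := abs_lt.mp this
      linarith
  · rw [tsum_eq_zero_of_not_summable hsum]
    exact ⟨∅, by simp, by simp; linarith⟩

lemma exists_finite_response (σ : DefStrategy G) {κ : ℝ} (hκ : 0 < κ) :
    ∃ (ρ : AttStrategy G) (Fb : Finset (List V × V)),
      (∀ h v, ρ.att h v ≠ none → (h, v) ∈ Fb) ∧
      alphaMax G - valG G - κ < euA σ ρ := by
  classical
  obtain ⟨π, hπ⟩ := exists_response σ (half_pos hκ)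
  set ε' : ℝ := (κ / 2) / (G.T.card + 1) with hε'def
  have hε' : 0 < ε' := by
    apply div_pos (half_pos hκ)
    positivity
  choose Fs hFs1 hFs2 using exists_finite_sets σ π hε'
  have htarget : ∀ (h : List V) (v τ0 : V),
      (match π.att h v with
        | some τ' => if (h, v) ∈ Fs τ' then some τ' else none
        | none => none) = some τ0 → τ0 ∈ G.T := by
    intro h v τ0 hres
    cases hp : π.att h v with
    | none => simp [hp] at hres
    | some τ'' =>
      simp only [hp] at hres
      split at hres
      · exact Option.some.inj hres ▸ π.target h v τ'' hp
      · cases hres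
  set ρ : AttStrategy G := ⟨fun h v => match π.att h v with
      | some τ' => if (h, v) ∈ Fs τ' then some τ' else none
      | none => none, htarget, by
    intro h v τ0 hres i h1 hlt
    have hp0 : π.att h v = some τ0 := by
      cases hp : π.att h v with
      | none => simp [hp] at hres
      | some τ'' =>
        simp only [hp] at hres
        split at hres
        · exact hres
        · cases hres
    have honce := π.once h v τ0 hp0 i h1 hlt
    simp only [honce]⟩ with hρ
  have hρatt : ∀ (h : List V) (v : V), ρ.att h v = match π.att h v with
      | some τ' => if (h, v) ∈ Fs τ' then some τ' else none
      | none => none := fun _ _ => rfl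
  have hbound : ∀ (h : List V) (v : V), ρ.att h v ≠ none → (h, v) ∈ G.T.biUnion Fs := by
    intro h v hne
    rw [hρatt] at hne
    cases hp : π.att h v with
    | none => simp [hp] at hne
    | some τ'' =>
      simp only [hp] at hne
      split at hne
      · rename_i hmem
        simp only [Finset.mem_biUnion]
        exact ⟨τ'', π.target h v τ'' hp, hmem⟩
      · simp at hne
  have hfilter : ∀ τ' : V,
      (G.T.biUnion Fs).filter (fun pr => ρ.att pr.1 pr.2 = some τ') = Fs τ' := by
    intro τ'
    ext pr
    simp only [Finset.mem_filter, Finset.mem_biUnion]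
    constructor
    · rintro ⟨-, hatt⟩
      rw [hρatt] at hatt
      cases hp : π.att pr.1 pr.2 with
      | none => simp [hp] at hatt
      | some τ'' =>
        simp only [hp] at hatt
        split at hatt
        · rename_i hmem
          exact Option.some.inj hatt ▸ hmem
        · cases hatt
    · intro hmem
      have hp := hFs1 τ' pr hmem
      refine ⟨⟨τ', π.target pr.1 pr.2 τ' hp, hmem⟩, ?_⟩
      show (match π.att pr.1 pr.2 with
        | some τ'' => if (pr.1, pr.2) ∈ Fs τ'' then some τ'' else none
        | none => none) = some τ'
      rw [hp]
      exact if_pos hmem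
  have heq : euA σ ρ = ∑ τ' ∈ G.T, ∑ pr ∈ Fs τ', W σ τ' pr := by
    rw [euA_eq_sum σ ρ _ hbound]
    exact Finset.sum_congr rfl fun τ' _ => by rw [hfilter τ']
  have hle : euA σ π ≤ euA σ ρ + G.T.card * ε' := by
    rw [heq, euA_eq_tsum_gw]
    calc ∑ τ' ∈ G.T,
          ∑' o' : {o' : Obs G // π.att o'.hist o'.next = some τ'}, gw σ τ' o'.val
        ≤ ∑ τ' ∈ G.T, ((∑ pr ∈ Fs τ', W σ τ' pr) + ε') :=
          Finset.sum_le_sum fun τ' _ => hFs2 τ'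
      _ = (∑ τ' ∈ G.T, ∑ pr ∈ Fs τ', W σ τ' pr) + G.T.card * ε' := by
          rw [Finset.sum_add_distrib]
          simp [mul_comm]
  have hcard : (G.T.card : ℝ) * ε' ≤ κ / 2 := by
    rw [hε'def]
    have h1 : (G.T.card : ℝ) / (G.T.card + 1) ≤ 1 := by
      rw [div_le_one (by positivity)]
      linarith
    calc (G.T.card : ℝ) * (κ / 2 / (G.T.card + 1))
        = (κ / 2) * ((G.T.card : ℝ) / (G.T.card + 1)) := by ring
      _ ≤ (κ / 2) * 1 := by
          apply mul_le_mul_of_nonneg_left h1 (half_pos hκ).le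
      _ = κ / 2 := mul_one _
  exact ⟨ρ, G.T.biUnion Fs, hbound, by linarith⟩

end AuxFinite

section AuxShift

variable {G : PatrollingGraph V}

/-- The conditional strategy after producing the history `l`. -/
def shiftStrat (γ : DefStrategy G) (l : List V) (hl : l ≠ []) (hlp : IsPath G l) :
    DefStrategy G where
  f h v := match h with
    | [] => if v = l.getLast hl then 1 else 0
    | x :: rest => if x = l.getLast hl then γ.f (l ++ rest) v else γ.f (x :: rest) v
  nonneg := by
    intro h v hp
    cases h with
    | nil =>
      dsimp only
      split <;> norm_num
    | cons x rest =>
      dsimp only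
      split
      · rename_i hx
        refine γ.nonneg _ _ ?_
        exact isPath_append l (l.getLast hl) rest hlp (List.getLast?_eq_getLast hl)
          (hx ▸ hp)
      · exact γ.nonneg _ _ hp
  sum_one := by
    intro h hp
    cases h with
    | nil =>
      dsimp only
      simp
    | cons x rest =>
      dsimp only
      split
      · rename_i hx
        refine γ.sum_one _ ?_
        exact isPath_append l (l.getLast hl) rest hlp (List.getLast?_eq_getLast hl)
          (hx ▸ hp)
      · exact γ.sum_one _ hp
  supp := by
    intro h v hp hpos
    cases h with
    | nil => exact Or.inl rfl
    | cons x rest =>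
      right
      dsimp only at hpos
      split at hpos
      · rename_i hx
        have hp' : IsPath G (l ++ rest) :=
          isPath_append l (l.getLast hl) rest hlp (List.getLast?_eq_getLast hl) (hx ▸ hp)
        rcases γ.supp (l ++ rest) v hp' hpos with h0 | ⟨u, hu, hE⟩
        · exact absurd h0 (by simp [hl])
        · refine ⟨u, ?_, hE⟩
          rw [← hu]
          cases rest with
          | nil =>
            simp only [List.append_nil]
            rw [List.getLast?_eq_getLast hl, hx]
            rfl
          | cons r rs =>
            rw [List.getLast?_append_cons, List.getLast?_cons_cons]
      · rcases γ.supp (x :: rest) v hp hpos with h0 | h1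
        · cases h0
        · exact h1

variable (γ : DefStrategy G) (l : List V) (hl : l ≠ []) (hlp : IsPath G l)

lemma shiftStrat_f_nil (v : V) :
    (shiftStrat γ l hl hlp).f [] v = if v = l.getLast hl then 1 else 0 := rfl

lemma shiftStrat_f_cons (x : V) (rest : List V) (v : V) :
    (shiftStrat γ l hl hlp).f (x :: rest) v
      = if x = l.getLast hl then γ.f (l ++ rest) v else γ.f (x :: rest) v := rfl

lemma shiftStrat_probListAux (ll rest : List V) :
    probListAux (shiftStrat γ l hl hlp).f ([l.getLast hl] ++ rest) ll
      = probListAux γ.f (l ++ rest) ll := by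
  refine probListAux_congr _ _ [l.getLast hl] l ?_ ll rest
  intro rest' v
  rw [List.singleton_append, shiftStrat_f_cons, if_pos rfl]

lemma shiftStrat_probList (rest : List V) :
    probList (shiftStrat γ l hl hlp).f (l.getLast hl :: rest) = probListAux γ.f l rest := by
  rw [probList, ← List.singleton_append, probListAux_append]
  have h1 : probListAux (shiftStrat γ l hl hlp).f [] [l.getLast hl] = 1 := by
    rw [probListAux_cons, probListAux_nil, shiftStrat_f_nil, if_pos rfl, mul_one]
  rw [h1, one_mul, List.nil_append]
  have := shiftStrat_probListAux γ l hl hlp rest []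
  simpa using this

lemma shiftStrat_probList_ne (x : V) (hx : x ≠ l.getLast hl) (rest : List V) :
    probList (shiftStrat γ l hl hlp).f (x :: rest) = 0 := by
  rw [probList, probListAux_cons, shiftStrat_f_nil, if_neg hx, zero_mul]

end AuxShift

section AuxMass

variable {G : PatrollingGraph V}

lemma sum_probListAux_ofFn (γ : DefStrategy G) :
    ∀ (k : ℕ) (pre : List V), IsPath G pre →
      ∑ fv : Fin k → V, probListAux γ.f pre (List.ofFn fv) = 1 := by
  intro k
  induction k with
  | zero =>
    intro pre _
    simp [probListAux_nil]
  | succ k ih =>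
    intro pre hpre
    let e : (Fin (k + 1) → V) ≃ (Fin k → V) × V :=
      { toFun := fun f => (fun i => f i.castSucc, f (Fin.last k))
        invFun := fun p => Fin.snoc p.1 p.2
        left_inv := fun f => by
          funext i
          refine Fin.lastCases ?_ ?_ i
          · simp
          · intro j
            simp
        right_inv := fun p => by
          refine Prod.ext ?_ ?_
          · funext i
            simp
          · simp }
    have hofn : ∀ (g : Fin k → V) (v : V),
        List.ofFn (Fin.snoc g v : Fin (k+1) → V) = List.ofFn g ++ [v] := by
      intro g v
      rw [List.ofFn_succ']
      rw [List.concat_eq_append]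
      congr 1
      · congr 1
        funext i
        simp
      · simp
    have hsum : ∑ fv : Fin (k+1) → V, probListAux γ.f pre (List.ofFn fv)
        = ∑ p : (Fin k → V) × V, probListAux γ.f pre (List.ofFn (Fin.snoc p.1 p.2)) := by
      rw [← Equiv.sum_comp e.symm (fun fv => probListAux γ.f pre (List.ofFn fv))]
      rfl
    rw [hsum]
    rw [Fintype.sum_prod_type]
    have hgv : ∀ g : Fin k → V,
        ∑ v : V, probListAux γ.f pre (List.ofFn (Fin.snoc g v))
          = probListAux γ.f pre (List.ofFn g) := by
      intro g
      have hstep : ∀ v : V, probListAux γ.f pre (List.ofFn (Fin.snoc g v))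
          = probListAux γ.f pre (List.ofFn g) * γ.f (pre ++ List.ofFn g) v := by
        intro v
        rw [hofn, probListAux_append, probListAux_cons, probListAux_nil, mul_one]
      rw [Finset.sum_congr rfl (fun v _ => hstep v), ← Finset.mul_sum]
      by_cases h0 : probListAux γ.f pre (List.ofFn g) = 0
      · simp [h0]
      · rw [γ.sum_one _ (probListAux_ne_zero_isPath γ _ pre hpre h0), mul_one]
    rw [Finset.sum_congr rfl (fun g _ => hgv g)]
    exact ih pre hpre

lemma sum_probList_ofFn (γ : DefStrategy G) (k : ℕ) :
    ∑ fv : Fin k → V, probList γ.f (List.ofFn fv) = 1 :=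
  sum_probListAux_ofFn γ k [] trivial

end AuxMass

section AuxVec

def toL {k : ℕ} (fv : Fin k → V) : List V := List.ofFn fv

lemma toL_length {k : ℕ} (fv : Fin k → V) : (toL fv).length = k := by
  simp [toL]

lemma toL_ne_nil {k : ℕ} (fv : Fin (k+1) → V) : toL fv ≠ [] := by
  intro h
  have := toL_length fv
  rw [h] at this
  simp at this

def lastF {k : ℕ} (fv : Fin (k+1) → V) : V := fv (Fin.last k)

lemma getLast?_toL {k : ℕ} (fv : Fin (k+1) → V) :
    (toL fv).getLast? = some (lastF fv) := by
  rw [toL, List.ofFn_succ', List.concat_eq_append, List.getLast?_append_cons]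
  rfl

lemma getLast_toL {k : ℕ} (fv : Fin (k+1) → V) :
    (toL fv).getLast (toL_ne_nil fv) = lastF fv := by
  have h := List.getLast?_eq_getLast (toL_ne_nil fv)
  rw [getLast?_toL fv] at h
  exact (Option.some.inj h).symm

/-- the first `k` entries of a list, as a tuple (with default value `d`). -/
def vecOfD (d : V) (k : ℕ) (h : List V) : Fin k → V := fun i => h.getD i d

lemma toL_vecOfD (d : V) (k : ℕ) (h : List V) (hlen : k ≤ h.length) :
    toL (vecOfD d k h) = h.take k := by
  apply List.ext_getElem
  · simp [toL_length, hlen]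
  · intro i h1 h2
    simp only [toL] at h1 ⊢
    rw [List.getElem_ofFn]
    rw [List.getElem_take]
    have hi : i < h.length := by
      rw [List.length_ofFn] at h1
      omega
    exact List.getD_eq_getElem h d hi

lemma vecOfD_append (d : V) (k : ℕ) (fv : Fin k → V) (rest : List V) :
    vecOfD d k (toL fv ++ rest) = fv := by
  funext i
  have hi : (i : ℕ) < (toL fv).length := by rw [toL_length]; exact i.2
  have h1 : (i : ℕ) < (toL fv ++ rest).length := by
    rw [List.length_append]; omega
  rw [vecOfD, List.getD_eq_getElem _ d h1, List.getElem_append_left hi]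
  simp [toL]

lemma vecOfD_take (d : V) (k : ℕ) (h : List V) (i : ℕ) (hi : k ≤ i) :
    vecOfD d k (h.take i) = vecOfD d k h := by
  funext j
  have hj : (j : ℕ) < i := lt_of_lt_of_le j.2 hi
  rw [vecOfD, vecOfD]
  by_cases hlen : (j : ℕ) < h.length
  · have h1 : (j : ℕ) < (h.take i).length := by
      rw [List.length_take]; omega
    rw [List.getD_eq_getElem _ d h1, List.getD_eq_getElem _ d hlen, List.getElem_take]
  · have h1 : (h.take i).length ≤ (j : ℕ) := by
      rw [List.length_take]; omega
    rw [List.getD_eq_default _ d h1, List.getD_eq_default _ d (by omega)]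

end AuxVec

section AuxTransport

variable {G : PatrollingGraph V}

lemma getLast?_consLast {k : ℕ} (fv : Fin (k+1) → V) (t : List V) :
    (lastF fv :: t).getLast? = (toL fv ++ t).getLast? := by
  cases t with
  | nil => simp [getLast?_toL]
  | cons r rs => rw [List.getLast?_cons_cons, List.getLast?_append_cons]

lemma W_transport (γ : DefStrategy G) {k : ℕ} (fv : Fin (k+1) → V)
    (hP : IsPath G (toL fv)) (τ' : V) (t : List V) (v : V) :
    W γ τ' (toL fv ++ t, v)
      = probList γ.f (toL fv)
        * W (shiftStrat γ (toL fv) (toL_ne_nil fv) hP) τ' (lastF fv :: t, v) := by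
  classical
  set L := toL fv with hLdef
  set σb := shiftStrat γ L (toL_ne_nil fv) hP with hσb
  have hgl : L.getLast (toL_ne_nil fv) = lastF fv := getLast_toL fv
  have hlast? : (lastF fv :: t).getLast? = (L ++ t).getLast? := getLast?_consLast fv t
  have hplaux : probList σb.f ((lastF fv :: t) ++ [v]) = probListAux γ.f L (t ++ [v]) := by
    rw [List.cons_append]
    have h := shiftStrat_probList γ L (toL_ne_nil fv) hP (t ++ [v])
    rw [hgl] at h
    exact h
  have hassoc : (L ++ t) ++ [v] = L ++ (t ++ [v]) := by rw [List.append_assoc]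
  by_cases hOK : ObsOK G (L ++ t, v)
  · have hOKb : ObsOK G (lastF fv :: t, v) := by
      refine ⟨by simp, ?_, ?_⟩
      · exact isPath_of_append L (lastF fv) t hOK.2.1 (getLast?_toL fv)
      · obtain ⟨u, hu, hE⟩ := hOK.2.2
        exact ⟨u, by rw [hlast?]; exact hu, hE⟩
    rw [W, dif_pos hOK, W, dif_pos hOKb]
    have h1 : obsProb γ (mkObs (L ++ t, v) hOK) = probList γ.f ((L ++ t) ++ [v]) := rfl
    have h2 : obsProb σb (mkObs (lastF fv :: t, v) hOKb)
        = probList σb.f ((lastF fv :: t) ++ [v]) := rfl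
    have h3 : probList γ.f ((L ++ t) ++ [v])
        = probList γ.f L * probListAux γ.f L (t ++ [v]) := by
      rw [hassoc, probList, probList, probListAux_append]
      simp
    have hprot : protection γ τ' (mkObs (L ++ t, v) hOK)
        = protection σb τ' (mkObs (lastF fv :: t, v) hOKb) := by
      refine protection_congr γ σb τ' _ _ hlast?.symm rfl ?_
      intro ll
      show probListAux γ.f ((L ++ t) ++ [v]) ll
          = probListAux σb.f ((lastF fv :: t) ++ [v]) ll
      rw [hassoc, List.cons_append, ← List.singleton_append]
      have h := shiftStrat_probListAux γ L (toL_ne_nil fv) hP ll (t ++ [v])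
      rw [hgl] at h
      exact h.symm
    rw [h1, h2, h3, hprot, hplaux]
    ring
  · rw [W, dif_neg hOK]
    by_cases hOKb : ObsOK G (lastF fv :: t, v)
    · rw [W, dif_pos hOKb]
      have hz : probListAux γ.f L (t ++ [v]) = 0 := by
        by_contra hnz
        apply hOK
        have hfull : IsPath G (L ++ (t ++ [v])) :=
          probListAux_ne_zero_isPath γ _ L hP hnz
        refine ⟨?_, ?_, ?_⟩
        · simp only [ne_eq, List.append_eq_nil_iff]
          intro hcon
          exact toL_ne_nil fv hcon.1
        · exact isPath_append_left (L ++ t) [v] (by rw [hassoc]; exact hfull)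
        · obtain ⟨u, hu, hE⟩ := hOKb.2.2
          exact ⟨u, by rw [← hlast?]; exact hu, hE⟩
      have h2 : obsProb σb (mkObs (lastF fv :: t, v) hOKb)
          = probList σb.f ((lastF fv :: t) ++ [v]) := rfl
      rw [h2, hplaux, hz]
      ring
    · rw [W, dif_neg hOKb]
      ring

lemma branch_sum (γ : DefStrategy G) {k : ℕ} (fv : Fin (k+1) → V)
    (hP : IsPath G (toL fv)) (τ' : V) (Sl Bl : Finset (List V × V))
    (hS : ∀ pr ∈ Sl, k+1 ≤ pr.1.length ∧ pr.1.take (k+1) = toL fv ∧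
          (lastF fv :: pr.1.drop (k+1), pr.2) ∈ Bl)
    (hB : ∀ sp ∈ Bl, W (shiftStrat γ (toL fv) (toL_ne_nil fv) hP) τ' sp ≠ 0 →
          (toL fv ++ sp.1.tail, sp.2) ∈ Sl) :
    ∑ pr ∈ Sl, W γ τ' pr
      = probList γ.f (toL fv)
        * ∑ sp ∈ Bl, W (shiftStrat γ (toL fv) (toL_ne_nil fv) hP) τ' sp := by
  classical
  set L := toL fv with hLdef
  set σb := shiftStrat γ L (toL_ne_nil fv) hP with hσb
  set ψ : List V × V → List V × V := fun pr => (lastF fv :: pr.1.drop (k+1), pr.2) with hψ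
  have hdecomp : ∀ pr ∈ Sl, pr = (L ++ pr.1.drop (k+1), pr.2) := by
    intro pr hpr
    obtain ⟨hlen, htake, -⟩ := hS pr hpr
    refine Prod.ext ?_ rfl
    show pr.1 = L ++ pr.1.drop (k+1)
    conv_lhs => rw [← List.take_append_drop (k+1) pr.1]
    rw [htake]
  have hstep : ∀ pr ∈ Sl, W γ τ' pr = probList γ.f L * W σb τ' (ψ pr) := by
    intro pr hpr
    conv_lhs => rw [hdecomp pr hpr]
    exact W_transport γ fv hP τ' (pr.1.drop (k+1)) pr.2
  rw [Finset.sum_congr rfl hstep, ← Finset.mul_sum]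
  congr 1
  have hinj : ∀ pr₁ ∈ Sl, ∀ pr₂ ∈ Sl, ψ pr₁ = ψ pr₂ → pr₁ = pr₂ := by
    intro pr₁ h₁ pr₂ h₂ heq
    have e1 : pr₁.1.drop (k+1) = pr₂.1.drop (k+1) :=
      List.tail_eq_of_cons_eq (congrArg Prod.fst heq)
    have e2 : pr₁.2 = pr₂.2 := by
      have h2 := congrArg Prod.snd heq
      simpa [hψ] using h2
    rw [hdecomp pr₁ h₁, hdecomp pr₂ h₂, e1, e2]
  rw [← Finset.sum_image (s := Sl) (g := ψ) (f := W σb τ') hinj]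
  refine Finset.sum_subset ?_ ?_
  · intro sp hsp
    rw [Finset.mem_image] at hsp
    obtain ⟨pr, hpr, rfl⟩ := hsp
    exact (hS pr hpr).2.2
  · intro sp hspB hspNI
    by_contra hne0
    have hOKb : ObsOK G sp := by
      by_contra h
      rw [W, dif_neg h] at hne0
      exact hne0 rfl
    obtain ⟨x, tl, hsp1⟩ : ∃ x tl, sp.1 = x :: tl := by
      cases hc : sp.1 with
      | nil => exact absurd hc hOKb.1
      | cons x tl => exact ⟨x, tl, rfl⟩
    have hx : x = lastF fv := by
      by_contra hxne
      apply hne0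
      rw [W, dif_pos hOKb]
      have h2 : obsProb σb (mkObs sp hOKb) = probList σb.f (sp.1 ++ [sp.2]) := rfl
      have hz : probList σb.f (sp.1 ++ [sp.2]) = 0 := by
        rw [hsp1, List.cons_append]
        refine shiftStrat_probList_ne γ L (toL_ne_nil fv) hP x ?_ (tl ++ [sp.2])
        rw [getLast_toL fv]
        exact hxne
      rw [h2, hz, zero_mul]
    have hmem := hB sp hspB hne0
    apply hspNI
    rw [Finset.mem_image]
    refine ⟨(L ++ sp.1.tail, sp.2), hmem, ?_⟩
    have hdrop : (L ++ sp.1.tail).drop (k+1) = sp.1.tail := by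
      refine List.drop_left' ?_
      exact toL_length fv
    rw [hψ]
    refine Prod.ext ?_ rfl
    show lastF fv :: (L ++ sp.1.tail).drop (k+1) = sp.1
    rw [hdrop, hsp1, ← hx]
    rfl

end AuxTransport

section AuxBigPi

variable {G : PatrollingGraph V}

open Classical in
/-- The combined attacker strategy: attack `τ` at the observation `o`; on any
branch deviating from `o` (at level `n+1`) play the branch strategy. -/
noncomputable def bigPi (γ : DefStrategy G) (o : Obs G) (τ : V) (hτ : τ ∈ G.T)
    (ρs : (Fin (o.hist.length + 1) → V) → AttStrategy G) : AttStrategy G where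
  att h v :=
    if h = o.hist ∧ v = o.next then some τ
    else if h.length ≤ o.hist.length then none
    else if toL (vecOfD o.next (o.hist.length + 1) h) = o.hist ++ [o.next]
          ∨ probList γ.f (toL (vecOfD o.next (o.hist.length + 1) h)) = 0 then none
    else (ρs (vecOfD o.next (o.hist.length + 1) h)).att
      (lastF (vecOfD o.next (o.hist.length + 1) h) :: h.drop (o.hist.length + 1)) v
  target := by
    intro h v τ0 hres
    split_ifs at hres
    · exact (Option.some.inj hres) ▸ hτ
    · exact (ρs _).target _ _ _ hres
  once := by
    intro h v τ0 hres i hi hlt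
    by_cases hmain : h = o.hist ∧ v = o.next
    · have hlh : h.length = o.hist.length := by rw [hmain.1]
      have h1 : ¬ (h.take i = o.hist ∧ h.get ⟨i, hlt⟩ = o.next) := by
        rintro ⟨ht, -⟩
        have h2 : (h.take i).length = i := by
          rw [List.length_take]; omega
        rw [ht] at h2
        omega
      rw [if_neg h1, if_pos]
      rw [List.length_take]
      omega
    · rw [if_neg hmain] at hres
      by_cases hlen : h.length ≤ o.hist.length
      · rw [if_pos hlen] at hres; cases hres
      rw [if_neg hlen] at hres
      have hlen' : o.hist.length + 1 ≤ h.length := by omega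
      by_cases hbad : toL (vecOfD o.next (o.hist.length + 1) h) = o.hist ++ [o.next]
          ∨ probList γ.f (toL (vecOfD o.next (o.hist.length + 1) h)) = 0
      · rw [if_pos hbad] at hres; cases hres
      rw [if_neg hbad] at hres
      have htoL : toL (vecOfD o.next (o.hist.length + 1) h) = h.take (o.hist.length + 1) :=
        toL_vecOfD o.next (o.hist.length + 1) h hlen'
      by_cases hi2 : i ≤ o.hist.length
      · have h1 : ¬ (h.take i = o.hist ∧ h.get ⟨i, hlt⟩ = o.next) := by
          rintro ⟨ht, hg⟩
          have hilen : (h.take i).length = i := by rw [List.length_take]; omega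
          have hieq : i = o.hist.length := by rw [ht] at hilen; omega
          apply hbad
          left
          have hstep : h.take (i + 1) = o.hist ++ [o.next] := by
            rw [List.take_succ, List.getElem?_eq_getElem hlt, ht]
            have : h[i]'hlt = o.next := hg
            rw [this]
            rfl
          rw [htoL, show o.hist.length + 1 = i + 1 by omega, hstep]
        rw [if_neg h1, if_pos]
        rw [List.length_take]
        omega
      · obtain ⟨j, rfl⟩ : ∃ j, i = (o.hist.length + 1) + j := ⟨i - (o.hist.length + 1), by omega⟩
        have h1 : ¬ (h.take (o.hist.length + 1 + j) = o.hist ∧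
            h.get ⟨o.hist.length + 1 + j, hlt⟩ = o.next) := by
          rintro ⟨ht, -⟩
          have h2 : (h.take (o.hist.length + 1 + j)).length = o.hist.length + 1 + j := by
            rw [List.length_take]; omega
          rw [ht] at h2
          omega
        rw [if_neg h1]
        have h2 : ¬ (h.take (o.hist.length + 1 + j)).length ≤ o.hist.length := by
          rw [List.length_take]
          omega
        rw [if_neg h2]
        have hveq : vecOfD o.next (o.hist.length + 1) (h.take (o.hist.length + 1 + j))
            = vecOfD o.next (o.hist.length + 1) h :=
          vecOfD_take o.next (o.hist.length + 1) h _ (by omega)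
        rw [hveq, if_neg hbad]
        have hlenc : j + 1 < (lastF (vecOfD o.next (o.hist.length + 1) h)
            :: h.drop (o.hist.length + 1)).length := by
          simp only [List.length_cons, List.length_drop]
          omega
        have honce := (ρs _).once _ _ _ hres (j + 1) (by omega) hlenc
        have htk : (lastF (vecOfD o.next (o.hist.length + 1) h)
              :: h.drop (o.hist.length + 1)).take (j + 1)
            = lastF (vecOfD o.next (o.hist.length + 1) h)
              :: (h.take (o.hist.length + 1 + j)).drop (o.hist.length + 1) := by
          rw [List.take_succ_cons]
          congr 1
          rw [List.drop_take]
          congr 1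
          omega
        have hgt : (lastF (vecOfD o.next (o.hist.length + 1) h)
              :: h.drop (o.hist.length + 1)).get ⟨j + 1, hlenc⟩
            = h.get ⟨o.hist.length + 1 + j, hlt⟩ := by
          simp only [List.get_eq_getElem, List.getElem_cons_succ]
          exact List.getElem_drop ..
        rw [← htk, ← hgt]
        exact honce

end AuxBigPi

section AuxEval

variable {G : PatrollingGraph V}

open Classical in
lemma bigPi_att_eq (γ : DefStrategy G) (o : Obs G) (τ : V) (hτ : τ ∈ G.T)
    (ρs : (Fin (o.hist.length + 1) → V) → AttStrategy G) (h : List V) (v : V) :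
    (bigPi γ o τ hτ ρs).att h v =
      if h = o.hist ∧ v = o.next then some τ
      else if h.length ≤ o.hist.length then none
      else if toL (vecOfD o.next (o.hist.length + 1) h) = o.hist ++ [o.next]
            ∨ probList γ.f (toL (vecOfD o.next (o.hist.length + 1) h)) = 0 then none
      else (ρs (vecOfD o.next (o.hist.length + 1) h)).att
        (lastF (vecOfD o.next (o.hist.length + 1) h) :: h.drop (o.hist.length + 1)) v := rfl

lemma W_shift_ne_zero_head (γ : DefStrategy G) {k : ℕ} (fv : Fin (k+1) → V)
    (hP : IsPath G (toL fv)) (τ' : V) (sp : List V × V)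
    (hne : W (shiftStrat γ (toL fv) (toL_ne_nil fv) hP) τ' sp ≠ 0) :
    sp.1 = lastF fv :: sp.1.tail := by
  have hOKb : ObsOK G sp := by
    by_contra h
    rw [W, dif_neg h] at hne
    exact hne rfl
  obtain ⟨x, tl, hsp1⟩ : ∃ x tl, sp.1 = x :: tl := by
    cases hc : sp.1 with
    | nil => exact absurd hc hOKb.1
    | cons x tl => exact ⟨x, tl, rfl⟩
  have hx : x = lastF fv := by
    by_contra hxne
    apply hne
    rw [W, dif_pos hOKb]
    have h2 : obsProb (shiftStrat γ (toL fv) (toL_ne_nil fv) hP) (mkObs sp hOKb)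
        = probList (shiftStrat γ (toL fv) (toL_ne_nil fv) hP).f (sp.1 ++ [sp.2]) := rfl
    have hz : probList (shiftStrat γ (toL fv) (toL_ne_nil fv) hP).f (sp.1 ++ [sp.2]) = 0 := by
      rw [hsp1, List.cons_append]
      refine shiftStrat_probList_ne γ (toL fv) (toL_ne_nil fv) hP x ?_ (tl ++ [sp.2])
      rw [getLast_toL fv]
      exact hxne
    rw [h2, hz, zero_mul]
  rw [hsp1, hx]
  rfl

/-- `W` at the pair of an observation `o` itself. -/
lemma W_pair_of_obs (γ : DefStrategy G) (τ' : V) (o : Obs G) :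
    W γ τ' (o.hist, o.next) = obsProb γ o * (G.α τ' - protection γ τ' o) :=
  W_of_obs γ τ' o

end AuxEval

section AuxPart1

variable {G : PatrollingGraph V}

lemma f_other_zero (σ : DefStrategy G) (h : List V) (hp : IsPath G h) (v₀ : V)
    (h1 : σ.f h v₀ = 1) {v : V} (hv : v ≠ v₀) : σ.f h v = 0 := by
  have hsum := σ.sum_one h hp
  have hsplit := Finset.add_sum_erase Finset.univ (σ.f h) (Finset.mem_univ v₀)
  have hz : ∑ x ∈ Finset.univ.erase v₀, σ.f h x = 0 := by
    have h2 : σ.f h v₀ + ∑ x ∈ Finset.univ.erase v₀, σ.f h x = 1 := by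
      rw [hsplit]
      exact hsum
    rw [h1] at h2
    linarith
  have := (Finset.sum_eq_zero_iff_of_nonneg
    (fun i _ => σ.nonneg h i hp)).mp hz v (Finset.mem_erase.mpr ⟨hv, Finset.mem_univ v⟩)
  exact this

lemma euA_attackNow_shift (γ γ' : DefStrategy G) (o : Obs G) (τ : V) (hτ : τ ∈ G.T)
    (hshift : IsShift γ o γ') :
    euA γ' (attackNow G τ hτ) = G.α τ - protection γ τ o := by
  classical
  obtain ⟨hs1, hs2, hs3⟩ := hshift
  set Fb1 := Finset.image (fun q : V × V => (([q.1] : List V), q.2)) Finset.univ with hFb1def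
  have hFb1 : ∀ h v, (attackNow G τ hτ).att h v ≠ none → (h, v) ∈ Fb1 := by
    intro h v hne
    have he : (attackNow G τ hτ).att h v = if h.length = 1 then some τ else none := rfl
    rw [he] at hne
    split at hne
    · rename_i hl
      obtain ⟨x, rfl⟩ := List.length_eq_one_iff.mp hl
      exact Finset.mem_image.mpr ⟨(x, v), Finset.mem_univ _, rfl⟩
    · exact absurd rfl hne
  rw [euA_eq_sum γ' (attackNow G τ hτ) Fb1 hFb1]
  have hAtt : ∀ pr ∈ Fb1, (attackNow G τ hτ).att pr.1 pr.2 = some τ := by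
    intro pr hpr
    obtain ⟨q, -, rfl⟩ := Finset.mem_image.mp hpr
    show (if (([q.1] : List V)).length = 1 then some τ else none) = some τ
    simp
  rw [Finset.sum_eq_single_of_mem τ hτ (fun τ' _ hne => ?_)]
  swap
  · have hempty : Fb1.filter (fun pr => (attackNow G τ hτ).att pr.1 pr.2 = some τ') = ∅ := by
      rw [Finset.filter_eq_empty_iff]
      intro pr hpr
      rw [hAtt pr hpr]
      intro hcon
      exact hne (Option.some.inj hcon).symm
    rw [hempty, Finset.sum_empty]
  have hfil : Fb1.filter (fun pr => (attackNow G τ hτ).att pr.1 pr.2 = some τ) = Fb1 :=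
    Finset.filter_true_of_mem (fun pr hpr => hAtt pr hpr)
  rw [hfil]
  have hmem0 : (([lastV o] : List V), o.next) ∈ Fb1 :=
    Finset.mem_image.mpr ⟨(lastV o, o.next), Finset.mem_univ _, rfl⟩
  have hOK0 : ObsOK G (([lastV o] : List V), o.next) := by
    refine ⟨by simp, trivial, ?_⟩
    obtain ⟨u, hu, hE⟩ := o.edge
    have hul : u = lastV o := by
      rw [List.getLast?_eq_getLast o.ne] at hu
      exact (Option.some.inj hu).symm
    exact ⟨lastV o, rfl, hul ▸ hE⟩
  rw [Finset.sum_eq_single_of_mem (([lastV o] : List V), o.next) hmem0 (fun pr hpr hne => ?_)]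
  swap
  · obtain ⟨q, -, rfl⟩ := Finset.mem_image.mp hpr
    by_cases hOK : ObsOK G (([q.1] : List V), q.2)
    · rw [W, dif_pos hOK]
      have hob : obsProb γ' (mkObs (([q.1] : List V), q.2) hOK)
          = γ'.f [] q.1 * (γ'.f [q.1] q.2 * 1) := rfl
      by_cases hq1 : q.1 = lastV o
      · have hq2 : q.2 ≠ o.next := by
          intro h2
          apply hne
          rw [hq1, h2]
        have hz : γ'.f [q.1] q.2 = 0 := by
          rw [hq1]
          exact f_other_zero γ' [lastV o] trivial o.next hs2 hq2
        rw [hob, hz]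
        ring
      · have hz : γ'.f [] q.1 = 0 := f_other_zero γ' [] trivial (lastV o) hs1 hq1
        rw [hob, hz]
        ring
    · rw [W, dif_neg hOK]
  rw [W, dif_pos hOK0]
  have hob : obsProb γ' (mkObs (([lastV o] : List V), o.next) hOK0)
      = γ'.f [] (lastV o) * (γ'.f [lastV o] o.next * 1) := rfl
  have hprot : protection γ' τ (mkObs (([lastV o] : List V), o.next) hOK0)
      = protection γ τ o := by
    refine protection_congr γ' γ τ _ _ ?_ rfl ?_
    · show ([lastV o] : List V).getLast? = o.hist.getLast?
      rw [List.getLast?_eq_getLast o.ne]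
      rfl
    · intro ll
      show probListAux γ'.f ([lastV o] ++ [o.next]) ll
          = probListAux γ.f (o.hist ++ [o.next]) ll
      have hcg := probListAux_congr γ'.f γ.f [lastV o, o.next] (o.hist ++ [o.next])
        (fun rest v => ?_) ll []
      · simpa using hcg
      · have e1 : (([lastV o, o.next] : List V)) ++ rest = lastV o :: o.next :: rest := rfl
        have e2 : (o.hist ++ [o.next]) ++ rest = o.hist ++ o.next :: rest := by
          rw [List.append_assoc]
          rfl
        rw [e1, e2]
        exact hs3 rest v
  rw [hob, hs1, hs2, hprot]
  ring

end AuxPart1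

/-- Let `G` be a patrolling graph, `γ` an optimal Defender's
strategy for `G`, and `o` an observation with `Prob^γ(o) > 0`. Then for every target
`τ ∈ T`, `EU_A(γ[o], π_τ) ≤ α_max − Val_G`, where `π_τ` is the Attacker's strategy
that attacks `τ` immediately. -/
theorem euA_shift_attackNow_le
    {V : Type} [Fintype V] [DecidableEq V] [Nonempty V] (G : PatrollingGraph V)
    (γ : DefStrategy G) (hopt : Optimal γ) (o : Obs G) (ho : 0 < obsProb γ o)
    (τ : V) (hτ : τ ∈ G.T) (γ' : DefStrategy G) (hshift : IsShift γ o γ') :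
    euA γ' (attackNow G τ hτ) ≤ alphaMax G - valG G := by
  classical
  rw [euA_attackNow_shift γ γ' o τ hτ hshift]
  have hP0 : 0 ≤ protection γ τ o := by
    have hpath : IsPath G (o.hist ++ [o.next]) :=
      isPath_concat o.hist o.next o.path (Or.inr o.edge)
    refine tsum_nonneg fun u => mul_nonneg (probListAux_nonneg γ _ _ hpath) ?_
    have hα := G.α_pos τ hτ
    have hβ := G.β_pos τ hτ
    have hβ1 := G.β_le_one τ hτ
    unfold evalDet
    refine mul_nonneg (mul_nonneg hα.le (pow_nonneg (by linarith) _)) hβ.le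
  have hXA : G.α τ - protection γ τ o ≤ alphaMax G := by
    have := alpha_le_alphaMax (G := G) hτ
    linarith
  by_cases hbb : BddBelow (Set.range (euD γ))
  swap
  · have hv0 : valG G = 0 := by
      rw [← hopt, dVal, Real.iInf_of_not_bddBelow hbb]
    rw [hv0, sub_zero]
    exact hXA
  have hval : ∀ πx : AttStrategy G, valG G ≤ euD γ πx := by
    intro πx
    rw [← hopt]
    exact ciInf_le hbb πx
  refine le_of_forall_pos_le_add ?_
  intro ε hε
  set p := obsProb γ o with hpdef
  have hκpos : 0 < ε * p := mul_pos hε ho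
  -- branch strategies
  have hselect : ∀ fv : Fin (o.hist.length + 1) → V,
      ∃ (ρ : AttStrategy G) (Fbv : Finset (List V × V)),
        (∀ h v, ρ.att h v ≠ none → (h, v) ∈ Fbv) ∧
        ∀ hP : IsPath G (toL fv),
          alphaMax G - valG G - ε * p
            < euA (shiftStrat γ (toL fv) (toL_ne_nil fv) hP) ρ := by
    intro fv
    by_cases hP : IsPath G (toL fv)
    · obtain ⟨ρ, Fbv, hb, hg⟩ :=
        exists_finite_response (shiftStrat γ (toL fv) (toL_ne_nil fv) hP) hκpos
      exact ⟨ρ, Fbv, hb, fun _ => hg⟩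
    · refine ⟨noAttack G, ∅, ?_, fun hP' => absurd hP' hP⟩
      intro h v hne
      exact absurd rfl hne
  choose ρs Fbs hρbound hρgain using hselect
  set Pp := bigPi γ o τ hτ ρs with hPpdef
  set FbPp : Finset (List V × V) :=
    insert (o.hist, o.next)
      (Finset.univ.biUnion fun fv : Fin (o.hist.length + 1) → V =>
        (Fbs fv).image (fun sp => (toL fv ++ sp.1.tail, sp.2))) with hFbPp
  have hPpbound : ∀ h v, Pp.att h v ≠ none → (h, v) ∈ FbPp := by
    intro h v hne
    rw [hPpdef, bigPi_att_eq] at hne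
    by_cases hmain : h = o.hist ∧ v = o.next
    · rw [hmain.1, hmain.2]
      exact Finset.mem_insert_self _ _
    rw [if_neg hmain] at hne
    by_cases hlen : h.length ≤ o.hist.length
    · rw [if_pos hlen] at hne; exact absurd rfl hne
    rw [if_neg hlen] at hne
    by_cases hbad : toL (vecOfD o.next (o.hist.length + 1) h) = o.hist ++ [o.next]
        ∨ probList γ.f (toL (vecOfD o.next (o.hist.length + 1) h)) = 0
    · rw [if_pos hbad] at hne; exact absurd rfl hne
    rw [if_neg hbad] at hne
    have hmem := hρbound _ _ _ hne
    refine Finset.mem_insert_of_mem (Finset.mem_biUnion.mpr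
      ⟨vecOfD o.next (o.hist.length+1) h, Finset.mem_univ _, ?_⟩)
    refine Finset.mem_image.mpr
      ⟨(lastF (vecOfD o.next (o.hist.length+1) h) :: h.drop (o.hist.length+1), v), hmem, ?_⟩
    have htoL := toL_vecOfD o.next (o.hist.length+1) h (by omega)
    refine Prod.ext ?_ rfl
    show toL (vecOfD o.next (o.hist.length+1) h) ++ h.drop (o.hist.length+1) = h
    rw [htoL]
    exact List.take_append_drop _ h
  set key : List V × V → Option (Fin (o.hist.length + 1) → V) := fun pr =>
    if o.hist.length + 1 ≤ pr.1.length then some (vecOfD o.next (o.hist.length + 1) pr.1)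
    else none with hkey
  -- per-target decomposition
  have hperτ : ∀ τ' ∈ G.T,
      ∑ pr ∈ FbPp.filter (fun pr => Pp.att pr.1 pr.2 = some τ'), W γ τ' pr
        = (if τ' = τ then p * (G.α τ - protection γ τ o) else 0)
          + ∑ fv : Fin (o.hist.length + 1) → V,
            (if toL fv = o.hist ++ [o.next] ∨ probList γ.f (toL fv) = 0 then 0
              else probList γ.f (toL fv) *
                (if hP : IsPath G (toL fv) then
                  ∑ sp ∈ (Fbs fv).filter (fun sp => (ρs fv).att sp.1 sp.2 = some τ'),
                    W (shiftStrat γ (toL fv) (toL_ne_nil fv) hP) τ' sp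
                else 0)) := by
    intro τ' hτ'
    have hmaps : ∀ pr ∈ FbPp.filter (fun pr => Pp.att pr.1 pr.2 = some τ'),
        key pr ∈ (Finset.univ : Finset (Option (Fin (o.hist.length+1) → V))) :=
      fun _ _ => Finset.mem_univ _
    rw [← Finset.sum_fiberwise_of_maps_to hmaps (W γ τ')]
    rw [Fintype.sum_option]
    congr 1
    · -- none fiber
      have hfib : (FbPp.filter (fun pr => Pp.att pr.1 pr.2 = some τ')).filter
            (fun pr => key pr = none)
          = (if τ' = τ then {(o.hist, o.next)} else (∅ : Finset (List V × V))) := by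
        ext pr
        simp only [Finset.mem_filter]
        constructor
        · rintro ⟨⟨hmem, hatt⟩, hkeyn⟩
          have hlen : ¬ (o.hist.length + 1 ≤ pr.1.length) := by
            by_contra hcon
            simp only [hkey, if_pos hcon] at hkeyn
            cases hkeyn
          rw [hPpdef, bigPi_att_eq] at hatt
          by_cases hmain : pr.1 = o.hist ∧ pr.2 = o.next
          · rw [if_pos hmain] at hatt
            have hττ : τ' = τ := (Option.some.inj hatt).symm
            rw [if_pos hττ, Finset.mem_singleton]
            exact Prod.ext hmain.1 hmain.2
          · rw [if_neg hmain, if_pos (by omega)] at hatt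
            cases hatt
        · intro hmem
          by_cases hττ : τ' = τ
          · rw [if_pos hττ, Finset.mem_singleton] at hmem
            subst hmem
            refine ⟨⟨Finset.mem_insert_self _ _, ?_⟩, ?_⟩
            · rw [hPpdef, bigPi_att_eq, if_pos ⟨rfl, rfl⟩, hττ]
            · have hno : ¬ (o.hist.length + 1 ≤ (o.hist, o.next).1.length) := by
                simp
              simp only [hkey, if_neg hno]
          · rw [if_neg hττ] at hmem
            cases hmem
      rw [hfib]
      by_cases hττ : τ' = τ
      · rw [if_pos hττ, if_pos hττ, Finset.sum_singleton, hττ]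
        exact W_pair_of_obs γ τ o
      · rw [if_neg hττ, if_neg hττ, Finset.sum_empty]
    · -- branch fibers
      refine Finset.sum_congr rfl fun fv _ => ?_
      by_cases hbad : toL fv = o.hist ++ [o.next] ∨ probList γ.f (toL fv) = 0
      · rw [if_pos hbad]
        have hempty : (FbPp.filter (fun pr => Pp.att pr.1 pr.2 = some τ')).filter
            (fun pr => key pr = some fv) = ∅ := by
          rw [Finset.filter_eq_empty_iff]
          rintro pr hpr
          simp only [Finset.mem_filter] at hpr
          obtain ⟨hmem, hatt⟩ := hpr
          intro hkeyf
          have hlen : o.hist.length + 1 ≤ pr.1.length := by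
            by_contra hcon
            simp only [hkey, if_neg hcon] at hkeyf
            cases hkeyf
          have hvec : vecOfD o.next (o.hist.length+1) pr.1 = fv := by
            simp only [hkey, if_pos hlen] at hkeyf
            exact Option.some.inj hkeyf
          rw [hPpdef, bigPi_att_eq] at hatt
          have hmain : ¬(pr.1 = o.hist ∧ pr.2 = o.next) := by
            rintro ⟨h1, -⟩
            rw [h1] at hlen
            omega
          rw [if_neg hmain, if_neg (by omega), hvec, if_pos hbad] at hatt
          cases hatt
        rw [hempty, Finset.sum_empty]
      · rw [if_neg hbad]
        have hPne : probList γ.f (toL fv) ≠ 0 := fun h => hbad (Or.inr h)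
        have hP : IsPath G (toL fv) := probList_ne_zero_isPath γ _ hPne
        rw [dif_pos hP]
        refine branch_sum γ fv hP τ' _ _ ?_ ?_
        · intro pr hpr
          simp only [Finset.mem_filter] at hpr
          obtain ⟨⟨hmem, hatt⟩, hkeyf⟩ := hpr
          have hlen : o.hist.length + 1 ≤ pr.1.length := by
            by_contra hcon
            simp only [hkey, if_neg hcon] at hkeyf
            cases hkeyf
          have hvec : vecOfD o.next (o.hist.length+1) pr.1 = fv := by
            simp only [hkey, if_pos hlen] at hkeyf
            exact Option.some.inj hkeyf
          have htake : pr.1.take (o.hist.length + 1) = toL fv := by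
            rw [← hvec, toL_vecOfD _ _ _ hlen]
          refine ⟨hlen, htake, ?_⟩
          rw [hPpdef, bigPi_att_eq] at hatt
          have hmain : ¬(pr.1 = o.hist ∧ pr.2 = o.next) := by
            rintro ⟨h1, -⟩
            rw [h1] at hlen
            omega
          rw [if_neg hmain, if_neg (by omega), hvec, if_neg hbad] at hatt
          simp only [Finset.mem_filter]
          refine ⟨hρbound fv _ _ ?_, hatt⟩
          rw [hatt]
          simp
        · intro sp hsp hne
          simp only [Finset.mem_filter] at hsp
          obtain ⟨hspF, hspAtt⟩ := hsp
          have hhead := W_shift_ne_zero_head γ fv hP τ' sp hne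
          have hlen2 : o.hist.length + 1 ≤ (toL fv ++ sp.1.tail).length := by
            rw [List.length_append, toL_length]
            omega
          have hvec2 : vecOfD o.next (o.hist.length+1) (toL fv ++ sp.1.tail) = fv :=
            vecOfD_append _ _ fv _
          have hdrop : (toL fv ++ sp.1.tail).drop (o.hist.length+1) = sp.1.tail :=
            List.drop_left' (toL_length fv)
          simp only [Finset.mem_filter]
          refine ⟨⟨?_, ?_⟩, ?_⟩
          · refine Finset.mem_insert_of_mem (Finset.mem_biUnion.mpr
              ⟨fv, Finset.mem_univ _, Finset.mem_image.mpr ⟨sp, hspF, rfl⟩⟩)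
          · rw [hPpdef, bigPi_att_eq]
            have hmain : ¬((toL fv ++ sp.1.tail) = o.hist ∧ sp.2 = o.next) := by
              rintro ⟨h1, -⟩
              have h2 := congrArg List.length h1
              rw [List.length_append, toL_length] at h2
              omega
            rw [if_neg hmain, if_neg (by omega), hvec2, if_neg hbad, hdrop, ← hhead]
            exact hspAtt
          · simp only [hkey, if_pos hlen2, hvec2]
  -- assemble
  have hsum1 : euA γ Pp = p * (G.α τ - protection γ τ o)
      + ∑ fv : Fin (o.hist.length + 1) → V,
        (if toL fv = o.hist ++ [o.next] ∨ probList γ.f (toL fv) = 0 then 0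
          else probList γ.f (toL fv) *
            (if hP : IsPath G (toL fv) then
              euA (shiftStrat γ (toL fv) (toL_ne_nil fv) hP) (ρs fv)
            else 0)) := by
    rw [euA_eq_sum γ Pp FbPp hPpbound, Finset.sum_congr rfl hperτ, Finset.sum_add_distrib]
    congr 1
    · rw [Finset.sum_ite_eq' G.T τ (fun _ => p * (G.α τ - protection γ τ o)), if_pos hτ]
    · rw [Finset.sum_comm]
      refine Finset.sum_congr rfl fun fv _ => ?_
      by_cases hbad : toL fv = o.hist ++ [o.next] ∨ probList γ.f (toL fv) = 0
      · simp only [if_pos hbad, Finset.sum_const_zero]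
      · simp only [if_neg hbad]
        have hPne : probList γ.f (toL fv) ≠ 0 := fun h => hbad (Or.inr h)
        have hP : IsPath G (toL fv) := probList_ne_zero_isPath γ _ hPne
        simp only [dif_pos hP]
        rw [← Finset.mul_sum]
        congr 1
        exact (euA_eq_sum (shiftStrat γ (toL fv) (toL_ne_nil fv) hP) (ρs fv)
          (Fbs fv) (hρbound fv)).symm
  -- mass facts
  have hmass : ∑ fv : Fin (o.hist.length + 1) → V, probList γ.f (toL fv) = 1 :=
    sum_probList_ofFn γ (o.hist.length + 1)
  have hmlen : o.hist.length + 1 ≤ (o.hist ++ [o.next]).length := by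
    rw [List.length_append]
    simp
  set mv : Fin (o.hist.length + 1) → V := vecOfD o.next (o.hist.length+1) (o.hist ++ [o.next])
    with hmv
  have hmveq : toL mv = o.hist ++ [o.next] := by
    rw [hmv, toL_vecOfD _ _ _ hmlen]
    apply List.take_of_length_le
    rw [List.length_append]
    simp
  have hpm : probList γ.f (toL mv) = p := by
    rw [hmveq, hpdef]
    rfl
  have hgel : ∀ (fw : Fin (o.hist.length + 1) → V) (i : Fin (o.hist.length + 1)),
      (toL fw)[(i : ℕ)]'(by rw [toL_length]; exact i.2) = fw i := by
    intro fw i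
    simp only [toL]
    rw [List.getElem_ofFn]
  have huniq : ∀ fv : Fin (o.hist.length + 1) → V, toL fv = o.hist ++ [o.next] → fv = mv := by
    intro fv hfv
    funext i
    have h1 := hgel fv i
    have h2 := hgel mv i
    simp only [hfv] at h1
    simp only [hmveq] at h2
    rw [← h1, ← h2]
  have hmass2 : ∑ fv : Fin (o.hist.length + 1) → V,
      (if toL fv = o.hist ++ [o.next] ∨ probList γ.f (toL fv) = 0 then 0
        else probList γ.f (toL fv)) = 1 - p := by
    have hpt : ∀ fv : Fin (o.hist.length + 1) → V,
        (if toL fv = o.hist ++ [o.next] ∨ probList γ.f (toL fv) = 0 then 0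
          else probList γ.f (toL fv))
        = probList γ.f (toL fv) - (if fv = mv then p else 0) := by
      intro fv
      by_cases hfm : fv = mv
      · subst hfm
        rw [if_pos (Or.inl hmveq), if_pos rfl, hpm]
        ring
      · rw [if_neg hfm]
        by_cases hz : probList γ.f (toL fv) = 0
        · rw [if_pos (Or.inr hz), hz]
          ring
        · have hnm : ¬ (toL fv = o.hist ++ [o.next] ∨ probList γ.f (toL fv) = 0) := by
            rintro (hc | hc)
            · exact hfm (huniq fv hc)
            · exact hz hc
          rw [if_neg hnm]
          ring
    rw [Finset.sum_congr rfl (fun fv _ => hpt fv), Finset.sum_sub_distrib, hmass,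
      Finset.sum_ite_eq' Finset.univ mv (fun _ => p), if_pos (Finset.mem_univ mv)]
  have hple1 : p ≤ 1 := by
    rw [← hmass, ← hpm]
    exact Finset.single_le_sum (fun fv _ => probList_nonneg γ (toL fv)) (Finset.mem_univ mv)
  have hub : euA γ Pp ≤ alphaMax G - valG G := by
    have := hval Pp
    rw [euD] at this
    linarith
  -- lower bounds on branch values
  have hS1 : ∑ fv : Fin (o.hist.length + 1) → V,
      (if toL fv = o.hist ++ [o.next] ∨ probList γ.f (toL fv) = 0 then 0
        else probList γ.f (toL fv) *
          (if hP : IsPath G (toL fv) then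
            euA (shiftStrat γ (toL fv) (toL_ne_nil fv) hP) (ρs fv)
          else 0))
      ≥ ∑ fv : Fin (o.hist.length + 1) → V,
        (if toL fv = o.hist ++ [o.next] ∨ probList γ.f (toL fv) = 0 then 0
          else probList γ.f (toL fv) * (alphaMax G - valG G - ε * p)) := by
    refine Finset.sum_le_sum fun fv _ => ?_
    by_cases hbad : toL fv = o.hist ++ [o.next] ∨ probList γ.f (toL fv) = 0
    · rw [if_pos hbad, if_pos hbad]
    · rw [if_neg hbad, if_neg hbad]
      have hPne : probList γ.f (toL fv) ≠ 0 := fun h => hbad (Or.inr h)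
      have hP : IsPath G (toL fv) := probList_ne_zero_isPath γ _ hPne
      rw [dif_pos hP]
      exact mul_le_mul_of_nonneg_left (hρgain fv hP).le (probList_nonneg γ (toL fv))
  have hS2 : ∑ fv : Fin (o.hist.length + 1) → V,
      (if toL fv = o.hist ++ [o.next] ∨ probList γ.f (toL fv) = 0 then 0
        else probList γ.f (toL fv) * (alphaMax G - valG G - ε * p))
      = (1 - p) * (alphaMax G - valG G - ε * p) := by
    rw [← hmass2, Finset.sum_mul]
    refine Finset.sum_congr rfl fun fv _ => ?_
    by_cases hbad : toL fv = o.hist ++ [o.next] ∨ probList γ.f (toL fv) = 0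
    · rw [if_pos hbad, if_pos hbad, zero_mul]
    · rw [if_neg hbad, if_neg hbad]
  have hchain : p * (G.α τ - protection γ τ o)
      + (1 - p) * (alphaMax G - valG G - ε * p) ≤ alphaMax G - valG G := by
    rw [hsum1] at hub
    rw [← hS2]
    linarith
  have hfinal : p * (G.α τ - protection γ τ o) ≤ p * ((alphaMax G - valG G) + ε) := by
    nlinarith [hchain, mul_pos hε ho, hple1, ho, mul_nonneg (mul_nonneg hε.le ho.le) ho.le]
  exact le_of_mul_le_mul_left hfinal ho
end Patrolling
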